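/- Let A, M, W, Z, X be discrete with W ⊥ (A,Z) | (M,X) and positivity. Suppose for all w,x: Σ_z q_a(z,a',x)·p(z | w, a', x) = p(w|a,x)/p(w|a',x). Then for all w,x: Σ_m [p(m|a,x)/p(m|a',x)]·p(m | a', w, x) = p(w|a,x)/p(w|a',x). -/

import Mathlib

open Finset
open scoped Classical

noncomputable section

/-- Probability of an event under weights `mu`. -/
def pr {O : Type} [Fintype O] (mu : O -> Real) (s : O -> Prop) : Real :=
  Finset.univ.sum (fun w => if s w then mu w else 0)

/-- Conditional probability `P(s | t)`. -/
def cpr {O : Type} [Fintype O] (mu : O -> Real) (s t : O -> Prop) : Real :=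
  pr mu (fun w => s w /\ t w) / pr mu t

/-- Expectation of `f`. -/
def expec {O : Type} [Fintype O] (mu : O -> Real) (f : O -> Real) : Real :=
  Finset.univ.sum (fun w => f w * mu w)

/-- Conditional expectation `E[f | t]`. -/
def cexp {O : Type} [Fintype O] (mu : O -> Real) (f : O -> Real) (t : O -> Prop) : Real :=
  (Finset.univ.sum (fun w => if t w then f w * mu w else 0)) / pr mu t


lemma pr_congr' {O : Type} [Fintype O] (mu : O -> Real) {s t : O -> Prop}
    (h : forall o, s o <-> t o) : pr mu s = pr mu t :=
  Finset.sum_congr rfl fun o _ => if_congr (h o) rfl rfl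

lemma pr_mono' {O : Type} [Fintype O] (mu : O -> Real) (h0 : forall o, 0 <= mu o)
    {s t : O -> Prop} (h : forall o, s o -> t o) : pr mu s <= pr mu t := by
  apply Finset.sum_le_sum
  intro o _
  by_cases hs : s o
  · simp [hs, h o hs]
  · simp only [hs, if_false]
    split <;> [exact h0 o; exact le_refl 0]

lemma pr_partition' {O T : Type} [Fintype O] [Fintype T] [DecidableEq T]
    (mu : O -> Real) (s : O -> Prop) (f : O -> T) :
    Finset.univ.sum (fun t => pr mu (fun o => s o /\ f o = t)) = pr mu s := by
  unfold pr
  rw [Finset.sum_comm]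
  apply Finset.sum_congr rfl
  intro o _
  by_cases hs : s o
  · simp [hs]
  · simp [hs]

theorem stmt17
    {O TA TM TZ TW TX : Type}
    [Fintype O] [Fintype TA] [Fintype TM] [Fintype TZ] [Fintype TW] [Fintype TX]
    [DecidableEq TA] [DecidableEq TM] [DecidableEq TZ] [DecidableEq TW] [DecidableEq TX]
    (mu : O -> Real) (hmu0 : forall o : O, 0 <= mu o)
    (hmu1 : Finset.univ.sum mu = 1)
    (A : O -> TA) (Y : O -> Real) (M : O -> TM) (Z : O -> TZ) (W : O -> TW) (X : O -> TX)
    (a a' : TA) (q : TZ -> TA -> TX -> Real)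
    (hWA : forall (v : TW) (t : TA) (z : TZ) (m : TM) (x : TX),
      pr mu (fun o => W o = v /\ A o = t /\ Z o = z /\ M o = m /\ X o = x) *
        pr mu (fun o => M o = m /\ X o = x) =
      pr mu (fun o => W o = v /\ M o = m /\ X o = x) *
        pr mu (fun o => A o = t /\ Z o = z /\ M o = m /\ X o = x))
    (hpos : forall (m : TM) (v : TW) (t : TA) (x : TX),
      0 < pr mu (fun o => M o = m /\ W o = v /\ A o = t /\ X o = x))
    (hq : forall (v : TW) (x : TX),
      Finset.univ.sum (fun z : TZ =>
        q z a' x * cpr mu (fun o => Z o = z) (fun o => W o = v /\ A o = a' /\ X o = x)) =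
      cpr mu (fun o => W o = v) (fun o => A o = a /\ X o = x) /
        cpr mu (fun o => W o = v) (fun o => A o = a' /\ X o = x)) :
    forall (v : TW) (x : TX),
      Finset.univ.sum (fun m : TM =>
        (cpr mu (fun o => M o = m) (fun o => A o = a /\ X o = x) /
          cpr mu (fun o => M o = m) (fun o => A o = a' /\ X o = x)) *
        cpr mu (fun o => M o = m) (fun o => A o = a' /\ W o = v /\ X o = x)) =
      cpr mu (fun o => W o = v) (fun o => A o = a /\ X o = x) /
        cpr mu (fun o => W o = v) (fun o => A o = a' /\ X o = x) := by
  intro v x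
  have hO : Nonempty O := by
    rcases isEmpty_or_nonempty O with h | h
    · rw [Finset.univ_eq_empty, Finset.sum_empty] at hmu1; norm_num at hmu1
    · exact h
  obtain ⟨o0⟩ := hO
  have hpp : ∀ (m : TM) (v' : TW) (t : TA) {s : O -> Prop},
      (∀ o, (M o = m ∧ W o = v' ∧ A o = t ∧ X o = x) -> s o) -> 0 < pr mu s :=
    fun m v' t _ h => lt_of_lt_of_le (hpos m v' t x) (pr_mono' mu hmu0 h)
  set m0 := M o0 with hm0
  have hPa : 0 < pr mu (fun o => A o = a ∧ X o = x) := hpp m0 v a (by tauto)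
  have hPa' : 0 < pr mu (fun o => A o = a' ∧ X o = x) := hpp m0 v a' (by tauto)
  have hPva' : 0 < pr mu (fun o => A o = a' ∧ W o = v ∧ X o = x) := hpp m0 v a' (by tauto)
  have hCI : ∀ (t : TA) (m : TM),
      pr mu (fun o => W o = v ∧ A o = t ∧ M o = m ∧ X o = x) *
        pr mu (fun o => M o = m ∧ X o = x) =
      pr mu (fun o => W o = v ∧ M o = m ∧ X o = x) *
        pr mu (fun o => A o = t ∧ M o = m ∧ X o = x) := by
    intro t m
    rw [← pr_partition' mu (fun o => W o = v ∧ A o = t ∧ M o = m ∧ X o = x) Z,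
        ← pr_partition' mu (fun o => A o = t ∧ M o = m ∧ X o = x) Z,
        Finset.sum_mul, Finset.mul_sum]
    apply Finset.sum_congr rfl
    intro z _
    rw [pr_congr' mu (show ∀ o, ((W o = v ∧ A o = t ∧ M o = m ∧ X o = x) ∧ Z o = z) ↔
          (W o = v ∧ A o = t ∧ Z o = z ∧ M o = m ∧ X o = x) from fun o => by tauto),
        pr_congr' mu (show ∀ o, ((A o = t ∧ M o = m ∧ X o = x) ∧ Z o = z) ↔
          (A o = t ∧ Z o = z ∧ M o = m ∧ X o = x) from fun o => by tauto)]
    exact hWA v t z m x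
  have key : ∀ m : TM,
      (cpr mu (fun o => M o = m) (fun o => A o = a ∧ X o = x) /
        cpr mu (fun o => M o = m) (fun o => A o = a' ∧ X o = x)) *
      cpr mu (fun o => M o = m) (fun o => A o = a' ∧ W o = v ∧ X o = x) =
      pr mu (fun o => W o = v ∧ A o = a ∧ M o = m ∧ X o = x) *
        (pr mu (fun o => A o = a' ∧ X o = x) /
          (pr mu (fun o => A o = a ∧ X o = x) *
            pr mu (fun o => A o = a' ∧ W o = v ∧ X o = x))) := by
    intro m
    have hqm : 0 < pr mu (fun o => M o = m ∧ X o = x) := hpp m v a (by tauto)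
    have hQa : 0 < pr mu (fun o => A o = a ∧ M o = m ∧ X o = x) := hpp m v a (by tauto)
    have hQa' : 0 < pr mu (fun o => A o = a' ∧ M o = m ∧ X o = x) := hpp m v a' (by tauto)
    have hNa' : 0 < pr mu (fun o => W o = v ∧ A o = a' ∧ M o = m ∧ X o = x) :=
      hpp m v a' (by tauto)
    have hrel : pr mu (fun o => A o = a ∧ M o = m ∧ X o = x) *
        pr mu (fun o => W o = v ∧ A o = a' ∧ M o = m ∧ X o = x) =
        pr mu (fun o => A o = a' ∧ M o = m ∧ X o = x) *
        pr mu (fun o => W o = v ∧ A o = a ∧ M o = m ∧ X o = x) := by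
      have h1 := hCI a m
      have h2 := hCI a' m
      have hq0 : pr mu (fun o => M o = m ∧ X o = x) ≠ 0 := ne_of_gt hqm
      apply mul_right_cancel₀ hq0
      linear_combination (pr mu (fun o => A o = a ∧ M o = m ∧ X o = x)) * h2 -
        (pr mu (fun o => A o = a' ∧ M o = m ∧ X o = x)) * h1
    unfold cpr
    rw [pr_congr' mu (show ∀ o, (M o = m ∧ A o = a ∧ X o = x) ↔
          (A o = a ∧ M o = m ∧ X o = x) from fun o => by tauto),
        pr_congr' mu (show ∀ o, (M o = m ∧ A o = a' ∧ X o = x) ↔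
          (A o = a' ∧ M o = m ∧ X o = x) from fun o => by tauto),
        pr_congr' mu (show ∀ o, (M o = m ∧ A o = a' ∧ W o = v ∧ X o = x) ↔
          (W o = v ∧ A o = a' ∧ M o = m ∧ X o = x) from fun o => by tauto)]
    field_simp
    linear_combination hrel
  rw [Finset.sum_congr rfl (fun m _ => key m), ← Finset.sum_mul]
  have hsum : Finset.univ.sum
      (fun m => pr mu (fun o => W o = v ∧ A o = a ∧ M o = m ∧ X o = x)) =
      pr mu (fun o => W o = v ∧ A o = a ∧ X o = x) := by
    rw [← pr_partition' mu (fun o => W o = v ∧ A o = a ∧ X o = x) M]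
    exact Finset.sum_congr rfl fun m _ => pr_congr' mu (fun o => by tauto)
  rw [hsum]
  unfold cpr
  rw [pr_congr' mu (show ∀ o, (W o = v ∧ A o = a ∧ X o = x) ↔
        (W o = v ∧ A o = a ∧ X o = x) from fun o => Iff.rfl),
      pr_congr' mu (show ∀ o, (W o = v ∧ A o = a' ∧ X o = x) ↔
        (A o = a' ∧ W o = v ∧ X o = x) from fun o => by tauto)]
  field_simp
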